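/- arXiv:1212.0244 — 4 statements merged into one kernel-verified Lean document; each statement's English description precedes it below -/
import Mathlib

section
/- For every real t and every real δ > -1, one has ∫_{ℝ} e^{-itx} / (2π cosh^{2δ+2}(x)) dx = 4^δ Γ(δ+1−it/2) Γ(δ+1+it/2) / (π Γ(2δ+2)). -/
open Real Complex MeasureTheory

private lemma cpow_ofReal_pos {r : ℝ} (hr : 0 < r) (c : ℂ) :
    ((r : ℂ)) ^ c = Complex.exp (c * (Real.log r : ℂ)) := by
  rw [Complex.cpow_def_of_ne_zero (by exact_mod_cast hr.ne'), ← Complex.ofReal_log hr.le, mul_comm]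

theorem cosh_power_fourier_integral (t δ : ℝ) (hδ : δ > -1) :
    ∫ x : ℝ, Complex.exp (-Complex.I * t * x) /
        ((2 * Real.pi : ℝ) * ((Real.cosh x ^ (2*δ+2) : ℝ) : ℂ))
      = (4:ℂ) ^ (δ:ℂ) * Complex.Gamma ((δ:ℂ) + 1 - Complex.I * t / 2) *
          Complex.Gamma ((δ:ℂ) + 1 + Complex.I * t / 2) /
          ((Real.pi : ℂ) * Complex.Gamma (2*δ+2)) := by
  have hπ : (0:ℝ) < Real.pi := Real.pi_pos
  set a : ℂ := (δ:ℂ) + 1 - Complex.I * t / 2 with ha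
  set b : ℂ := (δ:ℂ) + 1 + Complex.I * t / 2 with hb
  set f : ℝ → ℝ := fun x => Real.exp (2*x) / (1 + Real.exp (2*x)) with hfdef
  set f' : ℝ → ℝ := fun x => 2 * Real.exp (2*x) / (1 + Real.exp (2*x))^2 with hf'def
  set g : ℝ → ℂ := fun u => ((u:ℝ):ℂ)^(a-1) * (((1-u:ℝ)):ℂ)^(b-1) with hgdef
  have hEpos : ∀ x : ℝ, (0:ℝ) < Real.exp (2*x) := fun x => Real.exp_pos _
  have h1E : ∀ x : ℝ, (0:ℝ) < 1 + Real.exp (2*x) := fun x => by positivity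
  -- derivative of f
  have hderiv : ∀ x : ℝ, HasDerivAt f (f' x) x := by
    intro x
    have h1 : HasDerivAt (fun x : ℝ => Real.exp (2*x)) (2 * Real.exp (2*x)) x := by
      simpa [mul_comm] using (HasDerivAt.exp ((hasDerivAt_id x).const_mul 2))
    have h2 : HasDerivAt (fun x : ℝ => 1 + Real.exp (2*x)) (2 * Real.exp (2*x)) x :=
      h1.const_add 1
    have h3 : HasDerivAt (fun y : ℝ => Real.exp (2*y) / (1 + Real.exp (2*y))) _ x :=
      h1.div h2 (h1E x).ne'
    convert h3 using 1
    show 2 * Real.exp (2*x) / (1 + Real.exp (2*x))^2 = _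
    field_simp
    ring
  -- f strictly monotone
  have hmono : StrictMono f := by
    intro x y hxy
    have hE : Real.exp (2*x) < Real.exp (2*y) := Real.exp_lt_exp.mpr (by linarith)
    simp only [hfdef]
    rw [div_lt_div_iff₀ (h1E x) (h1E y)]
    nlinarith [hEpos x, hEpos y]
  -- image of f is Ioo 0 1
  have himg : f '' Set.univ = Set.Ioo 0 1 := by
    apply Set.eq_of_subset_of_subset
    · rintro u ⟨x, -, rfl⟩
      exact ⟨div_pos (hEpos x) (h1E x), (div_lt_one (h1E x)).mpr (by linarith [hEpos x])⟩
    · rintro u ⟨hu0, hu1⟩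
      refine ⟨Real.log (u/(1-u)) / 2, Set.mem_univ _, ?_⟩
      have h1u : (0:ℝ) < 1 - u := by linarith
      have hr : 0 < u / (1-u) := div_pos hu0 h1u
      have hexp : Real.exp (2 * (Real.log (u/(1-u)) / 2)) = u/(1-u) := by
        rw [show 2 * (Real.log (u/(1-u)) / 2) = Real.log (u/(1-u)) by ring, Real.exp_log hr]
      simp only [hfdef, hexp]
      field_simp
      ring
  -- change of variables
  have hchg := MeasureTheory.integral_image_eq_integral_abs_deriv_smul MeasurableSet.univ
      (fun x _ => (hderiv x).hasDerivWithinAt) hmono.injective.injOn g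
  rw [himg] at hchg
  simp only [Measure.restrict_univ] at hchg
  -- beta integral
  have hbeta : ∫ u in Set.Ioo (0:ℝ) 1, g u = Complex.betaIntegral a b := by
    rw [Complex.betaIntegral, intervalIntegral.integral_of_le zero_le_one,
        MeasureTheory.integral_Ioc_eq_integral_Ioo]
    refine MeasureTheory.setIntegral_congr_fun measurableSet_Ioo fun u hu => ?_
    simp only [hgdef]
    norm_cast
  -- pointwise identity
  have hpt : ∀ x : ℝ, (((4:ℝ)^δ * 2 : ℝ) : ℂ) * (|f' x| • g (f x))
      = Complex.exp (-Complex.I*t*x) * (((Real.cosh x ^ (2*δ+2) : ℝ)) : ℂ)⁻¹ := by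
    intro x
    have hE0 : 0 < Real.exp (2*x) := Real.exp_pos _
    have h1E0 : (0:ℝ) < 1 + Real.exp (2*x) := by positivity
    have hf'pos : 0 < f' x := by simp only [hf'def]; positivity
    have hfx0 : 0 < f x := div_pos hE0 h1E0
    have h1fx : (1 : ℝ) - f x = 1/(1 + Real.exp (2*x)) := by
      simp only [hfdef]; field_simp; ring
    have h1fx0 : 0 < (1:ℝ) - f x := by rw [h1fx]; positivity
    have hcosh : Real.cosh x = (1 + Real.exp (2*x))/(2*Real.exp x) := by
      have h2 : Real.exp (2*x) = Real.exp x * Real.exp x := by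
        rw [← Real.exp_add]; ring_nf
      rw [Real.cosh_eq, Real.exp_neg, h2]
      have hx0 : Real.exp x ≠ 0 := (Real.exp_pos x).ne'
      field_simp
      ring
    have hL2 : Real.log (f' x) = Real.log 2 + 2*x - 2*Real.log (1 + Real.exp (2*x)) := by
      simp only [hf'def]
      rw [Real.log_div (by positivity) (by positivity),
        Real.log_mul two_ne_zero hE0.ne', Real.log_exp, Real.log_pow]
      push_cast; ring
    have hLf : Real.log (f x) = 2*x - Real.log (1 + Real.exp (2*x)) := by
      simp only [hfdef]
      rw [Real.log_div hE0.ne' h1E0.ne', Real.log_exp]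
    have hL1f : Real.log (1 - f x) = -Real.log (1 + Real.exp (2*x)) := by
      rw [h1fx, one_div, Real.log_inv]
    have hLcosh : Real.log (Real.cosh x) = Real.log (1 + Real.exp (2*x)) - Real.log 2 - x := by
      rw [hcosh, Real.log_div h1E0.ne' (by positivity),
        Real.log_mul two_ne_zero (Real.exp_pos x).ne', Real.log_exp]
      ring
    have hLc : Real.log ((4:ℝ)^δ * 2) = (2*δ+1) * Real.log 2 := by
      rw [Real.log_mul (by positivity) two_ne_zero, Real.log_rpow (by norm_num)]
      rw [show (4:ℝ) = 2^2 by norm_num, Real.log_pow]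
      push_cast; ring
    have e1 : ((((4:ℝ)^δ * 2 : ℝ)) : ℂ) = Complex.exp (((2*δ+1) * Real.log 2 : ℝ) : ℂ) := by
      rw [← hLc, ← Complex.ofReal_exp, Real.exp_log (by positivity)]
    have e2 : ((|f' x| : ℝ) : ℂ) = Complex.exp ((Real.log (f' x) : ℝ) : ℂ) := by
      rw [abs_of_pos hf'pos, ← Complex.ofReal_exp, Real.exp_log hf'pos]
    have e3 : ((f x : ℝ):ℂ)^(a-1) = Complex.exp ((a-1) * (Real.log (f x) : ℂ)) :=
      cpow_ofReal_pos hfx0 _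
    have e4 : (((1 - f x : ℝ)):ℂ)^(b-1) = Complex.exp ((b-1) * (Real.log (1 - f x) : ℂ)) :=
      cpow_ofReal_pos h1fx0 _
    have e5 : (((Real.cosh x ^ (2*δ+2) : ℝ)) : ℂ)⁻¹
        = Complex.exp (-((((2*δ+2) * Real.log (Real.cosh x) : ℝ)) : ℂ)) := by
      rw [Real.rpow_def_of_pos (Real.cosh_pos x), Complex.ofReal_exp, ← Complex.exp_neg]
      congr 1
      push_cast
      ring
    rw [Complex.real_smul]
    simp only [hgdef]
    rw [e1, e2, e3, e4, e5, ← Complex.exp_add, ← Complex.exp_add, ← Complex.exp_add,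
      ← Complex.exp_add]
    congr 1
    rw [hL2, hLf, hL1f, hLcosh]
    rw [ha, hb]
    push_cast
    ring
  -- pointwise identity for the actual integrand
  have hint : ∀ x:ℝ, Complex.exp (-Complex.I * t * x) /
        ((2 * Real.pi : ℝ) * ((Real.cosh x ^ (2*δ+2) : ℝ) : ℂ))
      = (((4:ℝ)^δ / Real.pi : ℝ):ℂ) * (|f' x| • g (f x)) := by
    intro x
    have hC : (((Real.cosh x ^ (2*δ+2) : ℝ)) : ℂ) ≠ 0 := by
      exact_mod_cast (Real.rpow_pos_of_pos (Real.cosh_pos x) _).ne'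
    have hc2 : (((4:ℝ)^δ * 2 : ℝ) : ℂ) ≠ 0 := by
      exact_mod_cast (by positivity : ((4:ℝ)^δ * 2 : ℝ) ≠ 0)
    have h := hpt x
    have h' : (|f' x| • g (f x)) = (((4:ℝ)^δ * 2 : ℝ) : ℂ)⁻¹ *
        (Complex.exp (-Complex.I*t*x) * (((Real.cosh x ^ (2*δ+2) : ℝ)) : ℂ)⁻¹) := by
      rw [← h, inv_mul_cancel_left₀ hc2]
    rw [h']
    have hπ0 : ((Real.pi : ℝ):ℂ) ≠ 0 := by exact_mod_cast hπ.ne'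
    have h4 : (((4:ℝ)^δ : ℝ) : ℂ) ≠ 0 := by
      exact_mod_cast (by positivity : ((4:ℝ)^δ : ℝ) ≠ 0)
    push_cast
    field_simp
  calc ∫ x : ℝ, Complex.exp (-Complex.I * t * x) /
        ((2 * Real.pi : ℝ) * ((Real.cosh x ^ (2*δ+2) : ℝ) : ℂ))
      = ∫ x : ℝ, (((4:ℝ)^δ / Real.pi : ℝ):ℂ) * (|f' x| • g (f x)) := by
        exact integral_congr_ae (Filter.Eventually.of_forall hint)
    _ = (((4:ℝ)^δ / Real.pi : ℝ):ℂ) * ∫ x : ℝ, |f' x| • g (f x) :=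
        MeasureTheory.integral_const_mul _ _
    _ = (((4:ℝ)^δ / Real.pi : ℝ):ℂ) * Complex.betaIntegral a b := by rw [← hchg, hbeta]
    _ = (4:ℂ) ^ (δ:ℂ) * Complex.Gamma a * Complex.Gamma b /
          ((Real.pi : ℂ) * Complex.Gamma (2*(δ:ℂ)+2)) := by
        have hrea : 0 < a.re := by
          rw [ha]; simp; linarith
        have hreb : 0 < b.re := by
          rw [hb]; simp; linarith
        have hab : a + b = 2*(δ:ℂ)+2 := by rw [ha, hb]; ring
        have hG := Complex.Gamma_mul_Gamma_eq_betaIntegral hrea hreb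
        rw [hab] at hG
        have hGn : Complex.Gamma (2*(δ:ℂ)+2) ≠ 0 := by
          apply Complex.Gamma_ne_zero_of_re_pos
          simp only [Complex.add_re, Complex.mul_re, Complex.ofReal_re, Complex.ofReal_im]
          norm_num; linarith
        have hbeq : Complex.betaIntegral a b
            = Complex.Gamma a * Complex.Gamma b / Complex.Gamma (2*(δ:ℂ)+2) := by
          rw [eq_div_iff hGn, mul_comm _ (Complex.Gamma (2*(δ:ℂ)+2)), ← hG]
        rw [hbeq]
        have h4 : (((4:ℝ)^δ : ℝ) : ℂ) = (4:ℂ) ^ (δ:ℂ) := by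
          rw [Complex.ofReal_cpow (by norm_num : (0:ℝ) ≤ 4)]
          norm_num
        have hπ0 : ((Real.pi : ℝ):ℂ) ≠ 0 := by exact_mod_cast hπ.ne'
        push_cast
        rw [← h4]
        field_simp
end

section
/- Let W_m(x) = −(πħ/L)[(ν+m+1) cot(πx/L) − β/(ν+m+1)] for m ∈ ℕ, and let V_m(x) = (1/2M)(W_m² − ħW_m') + E₀^{(m)} with E₀^{(m)} = ε₀((m+ν+1)² − β²/(m+ν+1)²), ε₀ = ħ²π²/(2ML²). Then for all x ∈ (0, L), V_{m+1}(x) − V₀(x) = −(ħ²(m+1)(2ν+m+2)/(2M)) · d²/dx² [ln(sin(πx/L))]. -/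
open Real Set

set_option maxHeartbeats 1000000 in
theorem hierarchic_potential_difference (L hbar M ν β : ℝ) (hL : 0 < L) (hhbar : 0 < hbar)
    (hM : 0 < M) (hν : 0 ≤ ν) (hβ : 0 ≤ β)
    (ε₀ : ℝ) (hε₀ : ε₀ = hbar^2 * Real.pi^2 / (2 * M * L^2))
    (m : ℕ)
    (W : ℕ → ℝ → ℝ)
    (hW : ∀ (k : ℕ) (x : ℝ), W k x = -(Real.pi * hbar / L) *
        ((ν + k + 1) * (Real.cos (Real.pi * x / L) / Real.sin (Real.pi * x / L)) - β / (ν + k + 1)))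
    (E₀ : ℕ → ℝ)
    (hE₀ : ∀ k : ℕ, E₀ k = ε₀ * (((k : ℝ) + ν + 1)^2 - β^2 / ((k : ℝ) + ν + 1)^2))
    (V : ℕ → ℝ → ℝ)
    (hV : ∀ (k : ℕ) (x : ℝ),
        V k x = (1 / (2 * M)) * ((W k x)^2 - hbar * deriv (W k) x) + E₀ k)
    (x : ℝ) (hx : x ∈ Ioo 0 L) :
    V (m + 1) x - V 0 x
      = -(hbar^2 * ((m : ℝ) + 1) * (2 * ν + m + 2) / (2 * M)) *
          deriv (deriv (fun y => Real.log (Real.sin (Real.pi * y / L)))) x := by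
  obtain ⟨hx0, hxL⟩ := hx
  have hLne : L ≠ 0 := hL.ne'
  have hpos : 0 < Real.pi * x / L := by positivity
  have hlt : Real.pi * x / L < Real.pi := by
    rw [div_lt_iff₀ hL]
    nlinarith [Real.pi_pos]
  have hs : 0 < Real.sin (Real.pi * x / L) := Real.sin_pos_of_pos_of_lt_pi hpos hlt
  have hsne : Real.sin (Real.pi * x / L) ≠ 0 := hs.ne'
  have hu : ∀ y : ℝ, HasDerivAt (fun y => Real.pi * y / L) (Real.pi / L) y := by
    intro y
    simpa using ((hasDerivAt_id y).const_mul Real.pi).div_const L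
  have hsinD : ∀ y : ℝ, HasDerivAt (fun y => Real.sin (Real.pi * y / L))
      (Real.cos (Real.pi * y / L) * (Real.pi / L)) y := fun y =>
    (Real.hasDerivAt_sin _).comp y (hu y)
  have hcosD : ∀ y : ℝ, HasDerivAt (fun y => Real.cos (Real.pi * y / L))
      (-Real.sin (Real.pi * y / L) * (Real.pi / L)) y := fun y =>
    (Real.hasDerivAt_cos _).comp y (hu y)
  have hcot : ∀ y : ℝ, Real.sin (Real.pi * y / L) ≠ 0 →
      HasDerivAt (fun y => Real.cos (Real.pi * y / L) / Real.sin (Real.pi * y / L))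
        (-(Real.pi / L) / (Real.sin (Real.pi * y / L))^2) y := by
    intro y hy
    have h := (hcosD y).div (hsinD y) hy
    refine h.congr_deriv ?_
    have hpy := Real.sin_sq_add_cos_sq (Real.pi * y / L)
    congr 1
    linear_combination (-(Real.pi / L)) * hpy
  -- derivative of W k at x
  have hWd : ∀ k : ℕ, deriv (W k) x =
      -(Real.pi * hbar / L) * ((ν + k + 1) * (-(Real.pi / L) / (Real.sin (Real.pi * x / L))^2)) := by
    intro k
    have h1 : HasDerivAt (fun y => (ν + (k:ℝ) + 1) *
        (Real.cos (Real.pi * y / L) / Real.sin (Real.pi * y / L)) - β / (ν + k + 1))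
        ((ν + k + 1) * (-(Real.pi / L) / (Real.sin (Real.pi * x / L))^2)) x :=
      ((hcot x hsne).const_mul _).sub_const _
    have h2 := h1.const_mul (-(Real.pi * hbar / L))
    have hfe : W k = fun y => -(Real.pi * hbar / L) * ((ν + (k:ℝ) + 1) *
        (Real.cos (Real.pi * y / L) / Real.sin (Real.pi * y / L)) - β / (ν + k + 1)) :=
      funext (hW k)
    rw [hfe, h2.deriv]
  -- second derivative of log sin
  have hev : ∀ᶠ y in nhds x, Real.sin (Real.pi * y / L) ≠ 0 := by
    have hc : ContinuousAt (fun y => Real.sin (Real.pi * y / L)) x := by fun_prop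
    exact hc.eventually_ne hsne
  have hd1 : deriv (fun y => Real.log (Real.sin (Real.pi * y / L))) =ᶠ[nhds x]
      fun y => (Real.pi / L) * (Real.cos (Real.pi * y / L) / Real.sin (Real.pi * y / L)) := by
    filter_upwards [hev] with y hy
    have := ((hsinD y).log hy).deriv
    rw [this]; ring
  have hd2 : deriv (deriv (fun y => Real.log (Real.sin (Real.pi * y / L)))) x
      = (Real.pi / L) * (-(Real.pi / L) / (Real.sin (Real.pi * x / L))^2) := by
    rw [hd1.deriv_eq]
    exact (((hcot x hsne)).const_mul (Real.pi / L)).deriv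
  have hk1 : ν + ((m : ℝ) + 1) + 1 ≠ 0 := by positivity
  have hk0 : ν + (0 : ℝ) + 1 ≠ 0 := by positivity
  have hpyth : Real.cos (Real.pi * x / L) ^ 2 = 1 - Real.sin (Real.pi * x / L) ^ 2 := by
    nlinarith [Real.sin_sq_add_cos_sq (Real.pi * x / L)]
  have key : ∀ k : ℕ, V k x = ε₀ * ((ν + (k : ℝ) + 1) * (ν + k) / (Real.sin (Real.pi * x / L))^2
      - 2 * β * (Real.cos (Real.pi * x / L) / Real.sin (Real.pi * x / L))) := by
    intro k
    have hk : (0 : ℝ) < ν + (k : ℝ) + 1 := by positivity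
    rw [hV, hW, hWd, hE₀, hε₀]
    set si := Real.sin (Real.pi * x / L) with hsi
    set co := Real.cos (Real.pi * x / L) with hco
    field_simp
    ring_nf
    rw [hpyth]
    ring
  rw [key (m + 1), key 0, hd2, hε₀]
  push_cast
  set si := Real.sin (Real.pi * x / L) with hsi
  set co := Real.cos (Real.pi * x / L) with hco
  field_simp
  ring
end

section
/- Suppose H is a linear operator on a vector space, A₀, …, A_m are linear operators, E₀, …, E_m are scalars, and H_k (k = 0, …, m+1) are linear operators with H₀ = H such that H_k A_k† = A_k† H_{k+1} for each k, where H_k = (1/2M) A_k† A_k + E_k and H_{k+1} = (1/2M) A_k A_k† + E_k. Then, setting B_m† = A₀† A₁† ⋯ A_m†, one has H B_m† = B_m† H_{m+1} and B_m† B_m = (2M)^{m+1} ∏_{k=0}^{m} (H − E_k), where B_m = A_m ⋯ A₁ A₀. -/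
open Module

/-- Pull an element through a mapped product, switching `f` to `g`. -/
lemma pull_through {R : Type*} [Ring R] (x : R) (f g : ℕ → R) :
    ∀ l : List ℕ, (∀ k ∈ l, x * f k = g k * x) →
      x * (l.map f).prod = (l.map g).prod * x := by
  intro l
  induction l with
  | nil => simp
  | cons a t ih =>
    intro h
    simp only [List.map_cons, List.prod_cons]
    rw [← mul_assoc, h a (by simp), mul_assoc, ih (fun k hk => h k (by simp [hk])),
      ← mul_assoc]

theorem hierarchic_intertwining_and_product
    (V : Type*) [AddCommGroup V] [Module ℂ V]
    (M : ℂ) (hM : M ≠ 0) (m : ℕ)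
    (H : Module.End ℂ V)
    (A Adag : ℕ → Module.End ℂ V)
    (E : ℕ → ℂ)
    (Hs : ℕ → Module.End ℂ V)
    (hH0 : Hs 0 = H)
    (hfact : ∀ k ≤ m, Hs k = (1 / (2 * M)) • (Adag k * A k) + E k • (1 : Module.End ℂ V))
    (hfact' : ∀ k ≤ m, Hs (k + 1) = (1 / (2 * M)) • (A k * Adag k) + E k • (1 : Module.End ℂ V))
    (hint : ∀ k ≤ m, Hs k * Adag k = Adag k * Hs (k + 1))
    (Bm Bmdag : Module.End ℂ V)
    (hBm : Bm = ((List.range (m + 1)).reverse.map A).prod)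
    (hBmdag : Bmdag = ((List.range (m + 1)).map Adag).prod) :
    H * Bmdag = Bmdag * Hs (m + 1) ∧
    Bmdag * Bm
      = (2 * M) ^ (m + 1) •
          ((List.range (m + 1)).map (fun k => H - E k • (1 : Module.End ℂ V))).prod := by
  have h2M : (2 * M) ≠ 0 := by
    simp [hM]
  -- A_k† A_k = 2M (H_k - E_k)
  have hAA : ∀ k ≤ m, Adag k * A k = (2 * M) • (Hs k - E k • (1 : Module.End ℂ V)) := by
    intro k hk
    have h := hfact k hk
    have : (2 * M) • Hs k = Adag k * A k + (2 * M) • (E k • (1 : Module.End ℂ V)) := by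
      rw [h, smul_add, smul_smul]
      field_simp
      rw [one_smul]
    rw [smul_sub, this]
    abel
  -- Part 1: intertwining
  have part1 : ∀ j ≤ m + 1,
      Hs 0 * ((List.range j).map Adag).prod = ((List.range j).map Adag).prod * Hs j := by
    intro j
    induction j with
    | zero => intro _; simp
    | succ j ih =>
      intro hj
      have hjm : j ≤ m := Nat.lt_succ_iff.mp hj
      rw [List.range_succ, List.map_append, List.prod_append]
      simp only [List.map_cons, List.map_nil, List.prod_cons, List.prod_nil, mul_one]
      rw [← mul_assoc, ih (le_trans hjm (Nat.le_succ m)), mul_assoc, hint j hjm, ← mul_assoc]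
  -- Part 2: downward induction
  have key : ∀ n ≤ m + 1,
      ((List.range' (m + 1 - n) n).map Adag).prod *
        (((List.range' (m + 1 - n) n).reverse.map A)).prod
      = (2 * M) ^ n •
          ((List.range' (m + 1 - n) n).map
            (fun k => Hs (m + 1 - n) - E k • (1 : Module.End ℂ V))).prod := by
    intro n
    induction n with
    | zero => intro _; simp
    | succ n ih =>
      intro hn
      have hnm : n ≤ m := Nat.lt_succ_iff.mp hn
      set j := m + 1 - (n + 1) with hj
      have hjm : j ≤ m := by omega
      have hj1 : m + 1 - n = j + 1 := by omega
      have ihn := ih (le_trans hnm (Nat.le_succ m))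
      rw [hj1] at ihn
      rw [List.range'_succ]
      simp only [List.map_cons, List.prod_cons, List.reverse_cons, List.map_append,
        List.prod_append, List.map_cons, List.map_nil, List.prod_cons, List.prod_nil, mul_one]
      -- LHS = Adag j * (T * S) * A j
      have step1 : Adag j * (((List.range' (j + 1) n).map Adag).prod *
          ((List.range' (j + 1) n).reverse.map A).prod) * A j
          = Adag j * ((2 * M) ^ n •
              ((List.range' (j + 1) n).map
                (fun k => Hs (j + 1) - E k • (1 : Module.End ℂ V))).prod) * A j := by
        rw [ihn]
      have hcomm : ∀ k ∈ List.range' (j + 1) n,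
          Adag j * ((fun k => Hs (j + 1) - E k • (1 : Module.End ℂ V)) k)
            = ((fun k => Hs j - E k • (1 : Module.End ℂ V)) k) * Adag j := by
        intro k _
        simp only [mul_sub, sub_mul, ← hint j hjm]
        rw [mul_smul_comm, smul_mul_assoc, one_mul, mul_one]
      have step2 : Adag j * ((List.range' (j + 1) n).map
              (fun k => Hs (j + 1) - E k • (1 : Module.End ℂ V))).prod
          = ((List.range' (j + 1) n).map
              (fun k => Hs j - E k • (1 : Module.End ℂ V))).prod * Adag j :=
        pull_through _ _ _ _ hcomm
      have hcomm2 : Commute ((Hs j - E j • (1 : Module.End ℂ V)))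
          (((List.range' (j + 1) n).map
            (fun k => Hs j - E k • (1 : Module.End ℂ V))).prod) := by
        apply Commute.list_prod_right
        intro x hx
        simp only [List.mem_map] at hx
        obtain ⟨k, _, rfl⟩ := hx
        have c1 : Commute (Hs j) (E k • (1 : Module.End ℂ V)) := by
          unfold Commute SemiconjBy
          rw [mul_smul_comm, smul_mul_assoc, one_mul, mul_one]
        have c2 : Commute (E j • (1 : Module.End ℂ V)) (Hs j) := by
          unfold Commute SemiconjBy
          rw [mul_smul_comm, smul_mul_assoc, one_mul, mul_one]
        have c3 : Commute (E j • (1 : Module.End ℂ V)) (E k • (1 : Module.End ℂ V)) := by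
          simp only [Commute, SemiconjBy, mul_smul_comm, smul_mul_assoc, smul_smul, mul_comm]
        exact ((Commute.refl (Hs j)).sub_right c1).sub_left (c2.sub_right c3)
      calc Adag j * (((List.range' (j + 1) n).map Adag).prod *
              ((List.range' (j + 1) n).reverse.map A).prod * A j)
          = Adag j * (((List.range' (j + 1) n).map Adag).prod *
              ((List.range' (j + 1) n).reverse.map A).prod) * A j := by
            rw [mul_assoc, mul_assoc, mul_assoc]
        _ = Adag j * ((2 * M) ^ n •
              ((List.range' (j + 1) n).map
                (fun k => Hs (j + 1) - E k • (1 : Module.End ℂ V))).prod) * A j := step1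
        _ = (2 * M) ^ n • (Adag j *
              ((List.range' (j + 1) n).map
                (fun k => Hs (j + 1) - E k • (1 : Module.End ℂ V))).prod * A j) := by
            rw [mul_smul_comm, smul_mul_assoc]
        _ = (2 * M) ^ n • (((List.range' (j + 1) n).map
              (fun k => Hs j - E k • (1 : Module.End ℂ V))).prod * (Adag j * A j)) := by
            rw [step2, mul_assoc]
        _ = (2 * M) ^ n • (((List.range' (j + 1) n).map
              (fun k => Hs j - E k • (1 : Module.End ℂ V))).prod *
              ((2 * M) • (Hs j - E j • (1 : Module.End ℂ V)))) := by
            rw [hAA j hjm]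
        _ = (2 * M) ^ (n + 1) •
              ((Hs j - E j • (1 : Module.End ℂ V)) *
                ((List.range' (j + 1) n).map
                  (fun k => Hs j - E k • (1 : Module.End ℂ V))).prod) := by
            rw [mul_smul_comm, smul_smul, ← hcomm2.eq, pow_succ]
      -- done with step; conclude
  refine ⟨?_, ?_⟩
  · rw [hBmdag, ← hH0]
    exact part1 (m + 1) le_rfl
  · have := key (m + 1) le_rfl
    simp only [Nat.sub_self] at this
    rw [hBmdag, hBm, ← hH0]
    rw [show List.range (m + 1) = List.range' 0 (m + 1) by
      simp [List.range_eq_range']]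
    exact this
end

section
/- Under the hypotheses of the previous statement, B_m B_m† = (2M)^{m+1} ∏_{k=0}^{m} (H_{m+1} − E_k). -/
open Module

private lemma push_prod {V : Type*} [AddCommGroup V] [Module ℂ V]
    (X Y D : Module.End ℂ V) (h : X * D = D * Y) (l : List ℂ) :
    (l.map (fun c => X - c • (1 : Module.End ℂ V))).prod * D
      = D * (l.map (fun c => Y - c • (1 : Module.End ℂ V))).prod := by
  induction l with
  | nil => simp
  | cons c t ih =>
      have hc : (X - c • (1 : Module.End ℂ V)) * D = D * (Y - c • (1 : Module.End ℂ V)) := by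
        rw [sub_mul, mul_sub, h, smul_mul_assoc, one_mul, mul_smul_comm, mul_one]
      simp only [List.map_cons, List.prod_cons]
      rw [mul_assoc, ih, ← mul_assoc, hc, mul_assoc]

private lemma comm_prod {V : Type*} [AddCommGroup V] [Module ℂ V]
    (X : Module.End ℂ V) (a : ℂ) (l : List ℂ) :
    Commute (X - a • (1 : Module.End ℂ V))
      ((l.map (fun c => X - c • (1 : Module.End ℂ V))).prod) := by
  apply Commute.list_prod_right
  intro y hy
  simp only [List.mem_map] at hy
  obtain ⟨c, -, rfl⟩ := hy
  have h1 : Commute X ((c : ℂ) • (1 : Module.End ℂ V)) := (Commute.one_right X).smul_right c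
  have h2 : Commute ((a : ℂ) • (1 : Module.End ℂ V)) X := (Commute.one_left X).smul_left a
  have h3 : Commute ((a : ℂ) • (1 : Module.End ℂ V)) ((c : ℂ) • (1 : Module.End ℂ V)) :=
    ((Commute.one_left (1 : Module.End ℂ V)).smul_left a).smul_right c
  exact ((Commute.refl X).sub_right h1).sub_left (h2.sub_right h3)

private lemma aux_prod {V : Type*} [AddCommGroup V] [Module ℂ V]
    (M : ℂ) (hM : M ≠ 0) (A Adag : ℕ → Module.End ℂ V) (E : ℕ → ℂ)
    (Hs : ℕ → Module.End ℂ V) :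
    ∀ m : ℕ,
    (∀ k ≤ m, Hs (k + 1) = (1 / (2 * M)) • (A k * Adag k) + E k • (1 : Module.End ℂ V)) →
    (∀ k ≤ m, Hs k * Adag k = Adag k * Hs (k + 1)) →
    ((List.range (m + 1)).reverse.map A).prod * ((List.range (m + 1)).map Adag).prod
      = (2 * M) ^ (m + 1) •
          ((List.range (m + 1)).map (fun k => Hs (m + 1) - E k • (1 : Module.End ℂ V))).prod := by
  have h2M : (2 * M) ≠ 0 := by simp [hM]
  have key : ∀ k, Hs (k + 1) = (1 / (2 * M)) • (A k * Adag k) + E k • (1 : Module.End ℂ V) →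
      A k * Adag k = (2 * M) • (Hs (k + 1) - E k • (1 : Module.End ℂ V)) := by
    intro k hk
    rw [hk]
    rw [add_sub_cancel_right, smul_smul]
    field_simp
    rw [one_smul]
  intro m
  induction m with
  | zero =>
      intro hfact' hint
      simp only [List.range_succ, List.range_zero, List.nil_append, List.reverse_singleton,
        List.map_cons, List.map_nil, List.prod_cons, List.prod_nil, mul_one, pow_one]
      rw [key 0 (hfact' 0 le_rfl), zero_add, pow_one]
  | succ n ih =>
      intro hfact' hint
      have ihe := ih (fun k hk => hfact' k (hk.trans (Nat.le_succ n)))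
        (fun k hk => hint k (hk.trans (Nat.le_succ n)))
      rw [List.range_succ, List.reverse_append, List.map_append, List.prod_append,
        List.map_append, List.prod_append]
      simp only [List.reverse_singleton, List.map_cons, List.map_nil, List.prod_cons,
        List.prod_nil, mul_one]
      -- goal: (A (n+1) * Bn) * (Bndag * Adag (n+1)) = ...
      rw [mul_assoc (A (n+1)), ← mul_assoc (((List.range (n+1)).reverse.map A).prod), ihe]
      -- rewrite the product as map over scalar list for push
      have hmap : ∀ j, ((List.range (n + 1)).map (fun k => Hs j - E k • (1 : Module.End ℂ V)))
          = (((List.range (n + 1)).map E).map (fun c => Hs j - c • (1 : Module.End ℂ V))) := by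
        intro j; rw [List.map_map]; rfl
      rw [smul_mul_assoc, mul_smul_comm, hmap,
        push_prod (Hs (n + 1)) (Hs (n + 2)) (Adag (n + 1)) (hint (n + 1) le_rfl)
          ((List.range (n + 1)).map E),
        ← mul_assoc, key (n + 1) (hfact' (n + 1) le_rfl)]
      rw [smul_mul_assoc, smul_smul, ← pow_succ]
      rw [List.map_append, List.prod_append]
      simp only [List.map_cons, List.map_nil, List.prod_cons, List.prod_nil, mul_one]
      rw [hmap (n + 2)]
      congr 1
      exact (comm_prod (Hs (n + 2)) (E (n + 1)) ((List.range (n + 1)).map E)).eq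

theorem hierarchic_product_reversed
    (V : Type*) [AddCommGroup V] [Module ℂ V]
    (M : ℂ) (hM : M ≠ 0) (m : ℕ)
    (H : Module.End ℂ V)
    (A Adag : ℕ → Module.End ℂ V)
    (E : ℕ → ℂ)
    (Hs : ℕ → Module.End ℂ V)
    (hH0 : Hs 0 = H)
    (hfact : ∀ k ≤ m, Hs k = (1 / (2 * M)) • (Adag k * A k) + E k • (1 : Module.End ℂ V))
    (hfact' : ∀ k ≤ m, Hs (k + 1) = (1 / (2 * M)) • (A k * Adag k) + E k • (1 : Module.End ℂ V))
    (hint : ∀ k ≤ m, Hs k * Adag k = Adag k * Hs (k + 1))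
    (Bm Bmdag : Module.End ℂ V)
    (hBm : Bm = ((List.range (m + 1)).reverse.map A).prod)
    (hBmdag : Bmdag = ((List.range (m + 1)).map Adag).prod) :
    Bm * Bmdag
      = (2 * M) ^ (m + 1) •
          ((List.range (m + 1)).map (fun k => Hs (m + 1) - E k • (1 : Module.End ℂ V))).prod := by
  rw [hBm, hBmdag]
  exact aux_prod M hM A Adag E Hs m hfact' hint
end
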